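/- Let R be a commutative ring and A a commutative R-algebra. Then f-dim_R(A) ≤ dim(A) ≤ f-dim_R(A) + (1 + f-dim_R(A)) · dim_e^A(R), where dim denotes Krull dimension. -/

import Mathlib

open TensorProduct

noncomputable section

/-- The residue field `κ(p)` of a commutative ring `R` at a prime ideal `p`, realised as the
residue field of the localization of `R` at `p`; it is an `R`-algebra. -/
abbrev Kappa (R : Type*) [CommRing R] (p : Ideal R) [p.IsPrime] : Type _ :=
  IsLocalRing.ResidueField (Localization.AtPrime p)

/-- The fibre ring `κ(p) ⊗_R A` of an `R`-algebra `A` at a prime ideal `p` of `R`. -/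
abbrev FiberRing (R A : Type*) [CommRing R] [CommRing A] [Algebra R A]
    (p : Ideal R) [p.IsPrime] : Type _ :=
  (Kappa R p) ⊗[R] A

/-- A prime `p` of `R` is *effective* with respect to the `R`-algebra `A` if the fibre ring
`κ(p) ⊗_R A` is nonzero. -/
def IsEffective (R A : Type*) [CommRing R] [CommRing A] [Algebra R A]
    (p : PrimeSpectrum R) : Prop :=
  Nontrivial (FiberRing R A p.asIdeal)

/-- `dim_p(A) := dim (κ(p) ⊗_R A)`, the Krull dimension of the fibre ring of `A` at `p`. -/
def fiberDim (R A : Type*) [CommRing R] [CommRing A] [Algebra R A]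
    (p : Ideal R) [p.IsPrime] : WithBot ℕ∞ :=
  ringKrullDim (FiberRing R A p)

/-- `f-dim_R(A) := sup {dim_p(A) : p ∈ Spec_e^A(R)}`, the fibre Krull dimension of `A` over `R`. -/
def fdim (R A : Type*) [CommRing R] [CommRing A] [Algebra R A] : WithBot ℕ∞ :=
  ⨆ p : {p : PrimeSpectrum R // IsEffective R A p}, fiberDim R A p.1.asIdeal

/-- `dim_e^A(R)`, the effective Krull dimension of `R` with respect to `A`: the supremum of
lengths of chains of primes of `R` consisting of effective primes with respect to `A`. -/
def edim (R A : Type*) [CommRing R] [CommRing A] [Algebra R A] : WithBot ℕ∞ :=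
  Order.krullDim {p : PrimeSpectrum R // IsEffective R A p}

/-- A ring homomorphism `f : R → A` satisfies the Going-Down property if for any primes
`p ⊆ q` of `R` and any prime `Q` of `A` with `f⁻¹(Q) = q` there is a prime `P ⊆ Q` of `A`
with `f⁻¹(P) = p`. -/
def SatisfiesGoingDown {R A : Type*} [CommRing R] [CommRing A] (f : R →+* A) : Prop :=
  ∀ p q : Ideal R, p.IsPrime → q.IsPrime → p ≤ q →
    ∀ Q : Ideal A, Q.IsPrime → Q.comap f = q →
      ∃ P : Ideal A, P.IsPrime ∧ P ≤ Q ∧ P.comap f = p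

/-- The transcendence degree (as an extended natural number) of an algebra `L` over `K`:
the supremum of the cardinalities of finite algebraically independent subsets of `L`. -/
def algTrdeg (K L : Type*) [CommRing K] [CommRing L] [Algebra K L] : ℕ∞ :=
  ⨆ s : {s : Finset L // AlgebraicIndependent K (Subtype.val : {x : L // x ∈ s} → L)},
    (s.1.card : ℕ∞)

/-- Transcendence degree along a ring homomorphism. -/
def rhTrdeg {K L : Type*} [CommRing K] [CommRing L] (f : K →+* L) : ℕ∞ :=
  @algTrdeg K L _ _ f.toAlgebra

/-- `t.d.(C : k)`: the supremum, over the primes `q` of `C`, of the transcendence degree of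
`Frac(C/q)` over `k`. -/
def tdRing (k C : Type*) [CommRing k] [CommRing C] [Algebra k C] : ℕ∞ :=
  ⨆ q : PrimeSpectrum C, algTrdeg k (FractionRing (C ⧸ q.asIdeal))

/-- `t.d._p(C : R) := t.d.(κ(p) ⊗_R C : κ(p))`, the transcendence degree of `C` over `R`
at the prime `p`. -/
def tdLocal (R C : Type*) [CommRing R] [CommRing C] [Algebra R C]
    (p : Ideal R) [p.IsPrime] : ℕ∞ :=
  tdRing (Kappa R p) (FiberRing R C p)

/-- `Spec_p(A)`: the primes of `A` contracting to `p` over `R`. -/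
abbrev SpecAt (R A : Type*) [CommRing R] [CommRing A] [Algebra R A] (p : Ideal R) : Type _ :=
  {P : PrimeSpectrum A // P.asIdeal.comap (algebraMap R A) = p}

/-- `ht_p(P)`: the supremum of lengths of chains of primes of `A` contracting to `p`
and ending at `P`. -/
def htLocal (R : Type*) {A : Type*} [CommRing R] [CommRing A] [Algebra R A] {p : Ideal R}
    (P : SpecAt R A p) : ℕ∞ :=
  Order.height P

/-- A `k`-algebra `C` over a field `k` is an AF-ring if
`ht(Q) + t.d.(C/Q : k) = t.d.(C_Q : k)` for every prime `Q` of `C`. -/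
def IsAFRing (k C : Type*) [Field k] [CommRing C] [Algebra k C] : Prop :=
  ∀ Q : PrimeSpectrum C,
    Order.height Q + tdRing k (C ⧸ Q.asIdeal) = tdRing k (Localization.AtPrime Q.asIdeal)

/-- `A` is a fibred AF-ring at a prime `p` of `R`: the fibre ring `κ(p) ⊗_R A` is nonzero
and is an AF-ring over `κ(p)`. -/
def IsFibredAFRingAt (R A : Type*) [CommRing R] [CommRing A] [Algebra R A]
    (p : PrimeSpectrum R) : Prop :=
  Nontrivial (FiberRing R A p.asIdeal) ∧
    IsAFRing (Kappa R p.asIdeal) (FiberRing R A p.asIdeal)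

/-- `A` is a fibred AF-ring over `R`: every nonzero fibre ring `κ(p) ⊗_R A` is an AF-ring
over `κ(p)`. -/
def IsFibredAFRing (R A : Type*) [CommRing R] [CommRing A] [Algebra R A] : Prop :=
  ∀ p : PrimeSpectrum R, Nontrivial (FiberRing R A p.asIdeal) →
    IsAFRing (Kappa R p.asIdeal) (FiberRing R A p.asIdeal)

/-- The extension `Q[n] = Q·C[X₁,…,Xₙ]` of a prime `Q` of `C` to the polynomial ring
in `n` indeterminates; it is again prime. -/
def polyExt {C : Type*} [CommRing C] (n : ℕ) (Q : PrimeSpectrum C) :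
    PrimeSpectrum (MvPolynomial (Fin n) C) :=
  ⟨Q.asIdeal.map MvPolynomial.C, by
    have h : RingHom.ker (MvPolynomial.map (σ := Fin n) (Ideal.Quotient.mk Q.asIdeal)) =
        Q.asIdeal.map MvPolynomial.C := by
      rw [MvPolynomial.ker_map, Ideal.mk_ker]
    rw [← h]
    exact RingHom.ker_isPrime _⟩

/-- `ht(Q[s])` for `s : ℕ∞`: for finite `s = n` it is the height of `Q[n]`, and for
`s = ⊤` it is the supremum over all finite `n` of the heights of the `Q[n]`. -/
def polyExtHeight {C : Type*} [CommRing C] (Q : PrimeSpectrum C) (s : ℕ∞) : ℕ∞ :=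
  WithTop.recTopCoe (⨆ n : ℕ, Order.height (polyExt n Q))
    (fun n => Order.height (polyExt n Q)) s

/-- Wadsworth's invariant
`D(s, d, C) := sup {ht(Q[s]) + min(s, d + t.d.(C/Q : k)) : Q ∈ Spec C}`. -/
def Dinv (k C : Type*) [Field k] [CommRing C] [Algebra k C] (s d : ℕ∞) : ℕ∞ :=
  ⨆ Q : PrimeSpectrum C, polyExtHeight Q s + min s (d + tdRing k (C ⧸ Q.asIdeal))

/-- `D_p(s, d, B) := D(s, d, κ(p) ⊗_R B)`. -/
def DLocal (R B : Type*) [CommRing R] [CommRing B] [Algebra R B]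
    (p : Ideal R) [p.IsPrime] (s d : ℕ∞) : ℕ∞ :=
  Dinv (Kappa R p) (FiberRing R B p) s d


/-- The Krull dimension of a commutative ring, as an element of `WithBot ℕ∞`
(definitionally equal to `ringKrullDim`). -/
def ringDim (A : Type*) [CommRing A] : WithBot ℕ∞ :=
  ringKrullDim A


namespace StmtAux

lemma comb_lemma {α : Type*} [PartialOrder α] {n s e : ℕ} (q : Fin (n+1) → α)
    (hmono : Monotone q)
    (H1 : ∀ i j : Fin (n+1), i ≤ j → q i = q j → (j:ℕ) - (i:ℕ) ≤ s)
    (H2 : ∀ (m : ℕ) (v : Fin (m+1) → α), StrictMono v → m ≤ e) :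
    n ≤ s + (s+1) * e := by
  classical
  set Q : ℕ → α := fun i => q ⟨min i n, Nat.lt_succ_of_le (min_le_right _ _)⟩ with hQdef
  have hQmono : Monotone Q := by
    intro i j hij
    exact hmono (by simp [Fin.mk_le_mk]; omega)
  have hQconst : ∀ i, n ≤ i → Q i = Q n := by
    intro i hi
    simp only [hQdef]
    congr 1
    simp [Fin.mk.injEq]
    omega
  have H1' : ∀ i j : ℕ, i ≤ j → j ≤ n → Q i = Q j → j - i ≤ s := by
    intro i j hij hj h
    have hi : i ≤ n := le_trans hij hj
    have := H1 ⟨i, by omega⟩ ⟨j, by omega⟩ (by simp [Fin.mk_le_mk]; omega)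
      (by simpa only [hQdef, min_eq_left hi, min_eq_left hj] using h)
    simpa using this
  set r : ℕ → ℕ := fun i => ((Finset.range i).filter (fun t => ¬ Q t = Q (t+1))).card with hrdef
  have rsucc : ∀ i, r (i+1) = if Q i = Q (i+1) then r i else r i + 1 := by
    intro i
    simp only [hrdef, Finset.range_add_one, Finset.filter_insert]
    by_cases h : Q i = Q (i+1)
    · rw [if_neg (not_not.mpr h), if_pos h]
    · rw [if_pos h, if_neg h, Finset.card_insert_of_notMem
        (fun hmem => absurd (Finset.mem_range.mp (Finset.mem_filter.mp hmem).1) (lt_irrefl i))]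
  have rstep : ∀ i, r (i+1) ≤ r i + 1 := by
    intro i; rw [rsucc]; split <;> omega
  have rmono : Monotone r := by
    intro i j hij
    exact Finset.card_le_card (Finset.filter_subset_filter _ (Finset.range_subset_range.mpr hij))
  have F2 : ∀ i j, i ≤ j → r i = r j → Q i = Q j := by
    intro i j hij
    induction j, hij using Nat.le_induction with
    | base => intro _; rfl
    | succ j hij ih =>
      intro hr
      have h1 : r i ≤ r j := rmono hij
      have h2 : r j ≤ r (j+1) := rmono (Nat.le_succ j)
      have hrj : r i = r j := by omega
      have hQj : Q j = Q (j+1) := by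
        by_contra hne
        rw [rsucc] at hr
        simp [hne] at hr
        omega
      rw [ih hrj, hQj]
  have F2' : ∀ i j, i ≤ j → j ≤ n → Q i = Q j → r i = r j := by
    intro i j hij
    induction j, hij using Nat.le_induction with
    | base => intro _ _; rfl
    | succ j hij ih =>
      intro hjn hQ
      have hQij : Q i = Q j := by
        refine le_antisymm (hQmono hij) ?_
        rw [hQ]
        exact hQmono (Nat.le_succ j)
      have h1 : r i = r j := ih (by omega) hQij
      have h2 : Q j = Q (j+1) := by rw [← hQij, ← hQ]
      rw [rsucc, if_pos h2]
      exact h1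
  set k := r n with hkdef
  -- injection
  have hinj : Function.Injective (fun i : Fin (n+1) =>
      ((⟨r i, Nat.lt_succ_of_le (rmono (Nat.le_of_lt_succ i.2))⟩ : Fin (k+1)),
       (⟨(i : ℕ) % (s+1), Nat.mod_lt _ (Nat.succ_pos s)⟩ : Fin (s+1)))) := by
    have haux : ∀ i j : Fin (n+1), i ≤ j → r i = r j →
        (i : ℕ) % (s+1) = (j : ℕ) % (s+1) → i = j := by
      intro i j hij hr hm
      have hQ : Q i = Q j := F2 i j hij hr
      have hs' : (j : ℕ) - i ≤ s := H1' i j hij (Nat.le_of_lt_succ j.2) hQ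
      have hdvd : (s+1) ∣ (j : ℕ) - i := (Nat.modEq_iff_dvd' hij).mp hm
      have h0 : (j : ℕ) - i = 0 := Nat.eq_zero_of_dvd_of_lt hdvd (by omega)
      have hij' : (i : ℕ) ≤ j := hij
      exact Fin.ext (by omega)
    intro i j h
    simp only [Prod.mk.injEq, Fin.mk.injEq] at h
    rcases le_total i j with hij | hij
    · exact haux i j hij h.1 h.2
    · exact (haux j i hij h.1.symm h.2.symm).symm
  have hcard : n + 1 ≤ (k+1) * (s+1) := by
    have := Fintype.card_le_of_injective _ hinj
    simpa using this
  -- k ≤ e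
  have hexists : ∀ c, c ≤ k → ∃ i, i ≤ n ∧ r i = c := by
    intro c hc
    have hex : ∃ i, c ≤ r i := ⟨n, hc⟩
    by_cases h0 : Nat.find hex = 0
    · refine ⟨0, Nat.zero_le n, ?_⟩
      have hr0 : r 0 = 0 := by simp [hrdef]
      have := Nat.find_spec hex
      rw [h0] at this
      omega
    · obtain ⟨i', hi'⟩ := Nat.exists_eq_succ_of_ne_zero h0
      have h' : ¬ c ≤ r i' := Nat.find_min hex (by omega)
      have h2 := rstep i'
      have hi : c ≤ r (i'+1) := by have := Nat.find_spec hex; rwa [hi'] at this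
      have hin : i' + 1 ≤ n := by have := Nat.find_min' hex hc; omega
      exact ⟨i' + 1, hin, by omega⟩
  have hk_le_e : k ≤ e := by
    set mfun : ℕ → ℕ := fun c => Nat.find (hexists (min c k) (min_le_right _ _)) with hmdef
    have hm1 : ∀ c, mfun c ≤ n ∧ r (mfun c) = min c k := fun c =>
      Nat.find_spec (hexists (min c k) (min_le_right _ _))
    refine H2 k (fun c => Q (mfun c)) ?_
    intro c c' hcc
    have hcc' : (c : ℕ) < (c' : ℕ) := hcc
    have hck : (c : ℕ) ≤ k := Nat.le_of_lt_succ c.2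
    have hck' : (c' : ℕ) ≤ k := Nat.le_of_lt_succ c'.2
    have h1 := hm1 c
    have h2 := hm1 c'
    have hmm : mfun (c : ℕ) < mfun (c' : ℕ) := by
      by_contra h
      push_neg at h
      have h3 := rmono h
      have e1 := h1.2
      have e2 := h2.2
      omega
    refine lt_of_le_of_ne (hQmono hmm.le) ?_
    intro hQeq
    have h4 := F2' _ _ hmm.le h2.1 hQeq
    have e1 := h1.2
    have e2 := h2.2
    omega
  have h3 : (e+1)*(s+1) = s + (s+1)*e + 1 := by ring
  have h4 : (k+1)*(s+1) ≤ (e+1)*(s+1) := Nat.mul_le_mul_right _ (by omega)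
  omega


variable {R A : Type*} [CommRing R] [CommRing A] [Algebra R A] (p : Ideal R) [p.IsPrime]

-- the ring hom A -> F
def phi : A →+* FiberRing R A p := (Algebra.TensorProduct.includeRight (R := R) (A := Kappa R p) (B := A)).toRingHom

example (r : R) : algebraMap R (Kappa R p) r = IsLocalRing.residue _ (algebraMap R (Localization.AtPrime p) r) := by
  rw [IsScalarTower.algebraMap_eq R (Localization.AtPrime p) (Kappa R p)]
  rfl

example (s : R) (hs : s ∉ p) : IsUnit (algebraMap R (Kappa R p) s) := by
  rw [IsScalarTower.algebraMap_eq R (Localization.AtPrime p) (Kappa R p),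
    IsLocalRing.ResidueField.algebraMap_eq]
  rw [RingHom.comp_apply, isUnit_iff_ne_zero, Ne, IsLocalRing.residue_eq_zero_iff]
  intro h
  have : s ∈ (IsLocalRing.maximalIdeal (Localization.AtPrime p)).comap (algebraMap R (Localization.AtPrime p)) := h
  rw [← Ideal.under_def, Localization.AtPrime.comap_maximalIdeal] at this
  exact hs this

lemma unit_F (s : R) (hs : s ∉ p) : IsUnit (algebraMap R (FiberRing R A p) s) := by
  have h1 : IsUnit (algebraMap R (Kappa R p) s) := by
    rw [IsScalarTower.algebraMap_eq R (Localization.AtPrime p) (Kappa R p),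
      IsLocalRing.ResidueField.algebraMap_eq]
    rw [RingHom.comp_apply, isUnit_iff_ne_zero, Ne, IsLocalRing.residue_eq_zero_iff]
    intro h
    have : s ∈ (IsLocalRing.maximalIdeal (Localization.AtPrime p)).comap
        (algebraMap R (Localization.AtPrime p)) := h
    rw [← Ideal.under_def, Localization.AtPrime.comap_maximalIdeal] at this
    exact hs this
  have := h1.map (Algebra.TensorProduct.includeLeftRingHom (R := R) (A := Kappa R p) (B := A))
  rwa [show Algebra.TensorProduct.includeLeftRingHom (algebraMap R (Kappa R p) s)
      = algebraMap R (FiberRing R A p) s from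
    (Algebra.TensorProduct.includeLeft (R := R) (S := R) (A := Kappa R p) (B := A)).commutes s] at this

lemma phi_commutes (r : R) : phi (A := A) p (algebraMap R A r) = algebraMap R (FiberRing R A p) r :=
  (Algebra.TensorProduct.includeRight (R := R) (A := Kappa R p) (B := A)).commutes r

lemma surj_up_to_unit (x : FiberRing R A p) :
    ∃ (a : A) (s : R), s ∉ p ∧ algebraMap R (FiberRing R A p) s * x = phi (A := A) p a := by
  induction x using TensorProduct.induction_on with
  | zero => exact ⟨0, 1, fun h => ‹p.IsPrime›.ne_top (p.eq_top_of_isUnit_mem h isUnit_one),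
      by simp⟩
  | tmul k a =>
    obtain ⟨z, rfl⟩ := Ideal.Quotient.mk_surjective (I := IsLocalRing.maximalIdeal
      (Localization.AtPrime p)) k
    obtain ⟨⟨r, s⟩, rfl⟩ := IsLocalization.mk'_surjective p.primeCompl z
    refine ⟨algebraMap R A r * a, s, s.2, ?_⟩
    have key : algebraMap R (Kappa R p) s * (IsLocalRing.residue _ (IsLocalization.mk' _ r s))
        = algebraMap R (Kappa R p) r := by
      rw [IsScalarTower.algebraMap_eq R (Localization.AtPrime p) (Kappa R p)]
      show IsLocalRing.residue _ _ * IsLocalRing.residue _ _ = IsLocalRing.residue _ _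
      rw [← map_mul]
      congr 1
      exact IsLocalization.mk'_spec' _ r s
    calc algebraMap R (FiberRing R A p) s * (IsLocalRing.residue _ (IsLocalization.mk' _ r s)) ⊗ₜ[R] a
        = (algebraMap R (Kappa R p) s * IsLocalRing.residue _ (IsLocalization.mk' _ r s)) ⊗ₜ[R] a := by
          rw [Algebra.TensorProduct.algebraMap_apply, Algebra.TensorProduct.tmul_mul_tmul, one_mul]
      _ = (algebraMap R (Kappa R p) r) ⊗ₜ[R] a := by rw [key]
      _ = (1 : Kappa R p) ⊗ₜ[R] (algebraMap R A r * a) := by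
          rw [Algebra.algebraMap_eq_smul_one (A := Kappa R p), smul_tmul, Algebra.smul_def]
  | add x y hx hy =>
    obtain ⟨a, s, hs, ha⟩ := hx
    obtain ⟨b, t, ht, hb⟩ := hy
    refine ⟨algebraMap R A t * a + algebraMap R A s * b, s * t,
      fun h => ((Ideal.IsPrime.mem_or_mem ‹_› h).elim hs ht), ?_⟩
    rw [map_mul, mul_add, map_add, map_mul, map_mul, phi_commutes, phi_commutes]
    calc algebraMap R (FiberRing R A p) s * algebraMap R (FiberRing R A p) t * x
          + algebraMap R (FiberRing R A p) s * algebraMap R (FiberRing R A p) t * y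
        = algebraMap R (FiberRing R A p) t * (algebraMap R (FiberRing R A p) s * x)
          + algebraMap R (FiberRing R A p) s * (algebraMap R (FiberRing R A p) t * y) := by ring
      _ = _ := by rw [ha, hb]

lemma order_reflect {Q Q' : Ideal (FiberRing R A p)}
    (h : Q.comap (phi (A := A) p) ≤ Q'.comap (phi (A := A) p)) : Q ≤ Q' := by
  intro x hx
  obtain ⟨a, s, hs, key⟩ := surj_up_to_unit p x
  have ha : a ∈ Q.comap (phi (A := A) p) := by
    show phi p a ∈ Q
    rw [← key]; exact Q.mul_mem_left _ hx
  have ha' : phi (A := A) p a ∈ Q' := h ha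
  obtain ⟨u, hu⟩ := unit_F (A := A) p s hs
  have : x = ↑u⁻¹ * phi (A := A) p a := by
    rw [← key, ← hu, ← mul_assoc, Units.inv_mul, one_mul]
  rw [this]
  exact Q'.mul_mem_left _ ha'

def comapPhi : PrimeSpectrum (FiberRing R A p) → PrimeSpectrum A :=
  fun Q => ⟨Q.asIdeal.comap (phi (A := A) p), Ideal.IsPrime.comap _⟩

lemma comapPhi_strictMono : StrictMono (comapPhi (A := A) p) := by
  intro Q Q' h
  constructor
  · exact Ideal.comap_mono h.le
  · intro hle
    exact absurd (order_reflect p (hle : (comapPhi p Q').asIdeal ≤ (comapPhi p Q).asIdeal)) h.not_ge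

lemma fiberdim_le : ringKrullDim (FiberRing R A p) ≤ ringKrullDim A :=
  Order.krullDim_le_of_strictMono _ (comapPhi_strictMono p)

section Section2
variable (P : Ideal A) [P.IsPrime]

-- the field K
local notation "K" => Kappa A P

lemma algebraMap_A_K_eq_zero_iff (a : A) : algebraMap A K a = 0 ↔ a ∈ P := by
  rw [IsScalarTower.algebraMap_eq A (Localization.AtPrime P) K,
    IsLocalRing.ResidueField.algebraMap_eq, RingHom.comp_apply,
    IsLocalRing.residue_eq_zero_iff]
  constructor
  · intro h
    have : a ∈ (IsLocalRing.maximalIdeal (Localization.AtPrime P)).comap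
        (algebraMap A (Localization.AtPrime P)) := h
    rwa [← Ideal.under_def, Localization.AtPrime.comap_maximalIdeal] at this
  · intro h
    have : a ∈ (IsLocalRing.maximalIdeal (Localization.AtPrime P)).comap
        (algebraMap A (Localization.AtPrime P)) := by
      rwa [← Ideal.under_def, Localization.AtPrime.comap_maximalIdeal]
    exact this

end Section2

section Section3
variable (P : Ideal A) [P.IsPrime]

theorem exists_prime_over :
    letI : (P.comap (algebraMap R A)).IsPrime := Ideal.IsPrime.comap _
    ∃ Q : Ideal (FiberRing R A (P.comap (algebraMap R A))), Q.IsPrime ∧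
      Q.comap (phi (A := A) (P.comap (algebraMap R A))) = P := by
  letI : (P.comap (algebraMap R A)).IsPrime := Ideal.IsPrime.comap _
  set p : Ideal R := P.comap (algebraMap R A) with hp
  letI : Algebra R (Kappa A P) := ((algebraMap A (Kappa A P)).comp (algebraMap R A)).toAlgebra
  haveI : IsScalarTower R A (Kappa A P) := IsScalarTower.of_algebraMap_eq' rfl
  have halg : algebraMap R (Kappa A P) = (algebraMap A (Kappa A P)).comp (algebraMap R A) := rfl
  have hzero : ∀ r : R, r ∈ p → algebraMap R (Kappa A P) r = 0 := by
    intro r hr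
    rw [halg, RingHom.comp_apply, algebraMap_A_K_eq_zero_iff]
    exact hr
  have hunit : ∀ s : p.primeCompl, IsUnit (algebraMap R (Kappa A P) s) := by
    intro s
    rw [isUnit_iff_ne_zero, halg, RingHom.comp_apply, Ne, algebraMap_A_K_eq_zero_iff]
    exact s.2
  set gLoc : Localization.AtPrime p →+* Kappa A P := IsLocalization.lift hunit with hgLoc
  have spec : ∀ (r : R) (s : p.primeCompl),
      gLoc (IsLocalization.mk' _ r s) * algebraMap R (Kappa A P) s
        = algebraMap R (Kappa A P) r := by
    intro r s
    calc gLoc (IsLocalization.mk' _ r s) * algebraMap R (Kappa A P) s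
        = gLoc (IsLocalization.mk' _ r s) * gLoc (algebraMap R (Localization.AtPrime p) s) := by
          rw [hgLoc, IsLocalization.lift_eq]
      _ = gLoc (IsLocalization.mk' _ r s * algebraMap R (Localization.AtPrime p) s) :=
          (map_mul _ _ _).symm
      _ = gLoc (algebraMap R (Localization.AtPrime p) r) := by rw [IsLocalization.mk'_spec]
      _ = algebraMap R (Kappa A P) r := by rw [hgLoc, IsLocalization.lift_eq]
  haveI : IsLocalHom gLoc := by
    constructor
    intro x hx
    by_contra hnu
    obtain ⟨⟨r, s⟩, rfl⟩ := IsLocalization.mk'_surjective p.primeCompl x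
    have hr : r ∈ p := by
      by_contra hr
      exact hnu ((IsLocalization.AtPrime.isUnit_mk'_iff (Localization.AtPrime p) p r s).mpr hr)
    have h0 : gLoc (IsLocalization.mk' _ r s) = 0 := by
      have := spec r s
      rw [hzero r hr] at this
      exact ((hunit s).mul_left_eq_zero).mp this
    rw [h0] at hx
    exact (isUnit_iff_ne_zero.mp hx) rfl
  set gkRing : Kappa R p →+* Kappa A P := IsLocalRing.ResidueField.lift gLoc with hgk
  have comm : ∀ r : R, gkRing (algebraMap R (Kappa R p) r) = algebraMap R (Kappa A P) r := by
    intro r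
    rw [IsScalarTower.algebraMap_eq R (Localization.AtPrime p) (Kappa R p),
      IsLocalRing.ResidueField.algebraMap_eq, RingHom.comp_apply]
    rw [hgk, IsLocalRing.ResidueField.lift_residue_apply, hgLoc, IsLocalization.lift_eq]
  let gkAlg : Kappa R p →ₐ[R] Kappa A P := ⟨gkRing, comm⟩
  let gA : A →ₐ[R] Kappa A P := IsScalarTower.toAlgHom R A (Kappa A P)
  let χ : FiberRing R A p →ₐ[R] Kappa A P := Algebra.TensorProduct.productMap gkAlg gA
  refine ⟨RingHom.ker χ.toRingHom, RingHom.ker_isPrime _, ?_⟩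
  ext a
  have : χ (phi (A := A) p a) = algebraMap A (Kappa A P) a := by
    show χ ((1 : Kappa R p) ⊗ₜ[R] a) = _
    rw [Algebra.TensorProduct.productMap_apply_tmul, map_one, one_mul]
    rfl
  simp only [Ideal.mem_comap, RingHom.mem_ker]
  show χ (phi (A := A) p a) = 0 ↔ a ∈ P
  rw [this, algebraMap_A_K_eq_zero_iff]

end Section3


lemma exists_prime_over' {p : Ideal R} [hp : p.IsPrime] {P : Ideal A} [P.IsPrime]
    (hP : P.comap (algebraMap R A) = p) :
    ∃ Q : Ideal (FiberRing R A p), Q.IsPrime ∧ Q.comap (phi (A := A) p) = P := by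
  subst hP
  exact exists_prime_over P

lemma effective_comap (P : PrimeSpectrum A) :
    Nontrivial (FiberRing R A (P.asIdeal.comap (algebraMap R A))) := by
  obtain ⟨Q, hQ, -⟩ := exists_prime_over' (p := P.asIdeal.comap (algebraMap R A))
    (P := P.asIdeal) rfl
  by_contra h
  rw [not_nontrivial_iff_subsingleton] at h
  exact hQ.ne_top (Subsingleton.elim _ _)

lemma fiber_chain_le (p : Ideal R) [p.IsPrime] {m : ℕ} (w : Fin (m+1) → PrimeSpectrum A)
    (hw : StrictMono w) (hcomap : ∀ t, (w t).asIdeal.comap (algebraMap R A) = p) :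
    (m : WithBot ℕ∞) ≤ ringKrullDim (FiberRing R A p) := by
  have hex : ∀ t : Fin (m+1), ∃ Q : Ideal (FiberRing R A p), Q.IsPrime ∧
      Q.comap (phi (A := A) p) = (w t).asIdeal := fun t => exists_prime_over' (hcomap t)
  choose Q hQp hQc using hex
  let Qs : Fin (m+1) → PrimeSpectrum (FiberRing R A p) := fun t => ⟨Q t, hQp t⟩
  have hstrict : StrictMono Qs := by
    intro t t' h
    have hw' : w t < w t' := hw h
    rw [← PrimeSpectrum.asIdeal_lt_asIdeal]
    refine lt_of_le_of_ne ?_ ?_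
    · refine order_reflect p ?_
      rw [hQc, hQc]
      exact (PrimeSpectrum.asIdeal_le_asIdeal _ _).mpr hw'.le
    · intro hQeq
      have hQeq' : Q t = Q t' := hQeq
      have : (w t).asIdeal = (w t').asIdeal := by rw [← hQc, ← hQc, hQeq']
      exact hw'.ne (PrimeSpectrum.ext this)
  exact Order.LTSeries.length_le_krullDim ⟨m, Qs, fun i => hstrict i.castSucc_lt_succ⟩

end StmtAux

/-- For a commutative ring `R` and a commutative `R`-algebra `A`,
`f-dim_R(A) ≤ dim A ≤ f-dim_R(A) + (1 + f-dim_R(A)) · dim_e^A(R)`. -/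
theorem stmt_0 (R A : Type*) [CommRing R] [CommRing A] [Algebra R A] :
    fdim R A ≤ ringDim A ∧
      ringDim A ≤ fdim R A + (1 + fdim R A) * edim R A := by
  have part1 : fdim R A ≤ ringDim A := by
    refine iSup_le ?_
    rintro ⟨p, hp⟩
    exact StmtAux.fiberdim_le (A := A) p.asIdeal
  refine ⟨part1, ?_⟩
  by_cases hE : IsEmpty (PrimeSpectrum A)
  · have hd : ringDim A = ⊥ := Order.krullDim_eq_bot
    rw [hd]
    exact bot_le
  · rw [not_isEmpty_iff] at hE
    obtain ⟨P₀⟩ := hE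
    set cm : PrimeSpectrum A → PrimeSpectrum R :=
      fun P => ⟨P.asIdeal.comap (algebraMap R A), Ideal.IsPrime.comap _⟩ with hcm
    have hcm_mono : Monotone cm := fun P P' h =>
      (PrimeSpectrum.asIdeal_le_asIdeal _ _).mp
        (Ideal.comap_mono ((PrimeSpectrum.asIdeal_le_asIdeal _ _).mpr h))
    have heff : ∀ P : PrimeSpectrum A, IsEffective R A (cm P) := fun P =>
      StmtAux.effective_comap P
    have hfd_le : ∀ P : PrimeSpectrum A,
        ringKrullDim (FiberRing R A (cm P).asIdeal) ≤ fdim R A := fun P =>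
      le_iSup (fun p : {p : PrimeSpectrum R // IsEffective R A p} =>
        fiberDim R A p.1.asIdeal) ⟨cm P, heff P⟩
    have hf0 : (0 : WithBot ℕ∞) ≤ fdim R A := by
      refine le_trans ?_ (hfd_le P₀)
      haveI : Nontrivial (FiberRing R A (cm P₀).asIdeal) := heff P₀
      obtain ⟨M, hM⟩ := Ideal.exists_maximal (FiberRing R A (cm P₀).asIdeal)
      haveI : Nonempty (PrimeSpectrum (FiberRing R A (cm P₀).asIdeal)) := ⟨⟨M, hM.isPrime⟩⟩
      exact Order.krullDim_nonneg
    have he0 : (0 : WithBot ℕ∞) ≤ edim R A := by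
      haveI : Nonempty {p : PrimeSpectrum R // IsEffective R A p} := ⟨⟨cm P₀, heff P₀⟩⟩
      exact Order.krullDim_nonneg
    obtain ⟨f', hf'⟩ : ∃ f' : ℕ∞, fdim R A = ↑f' := by
      cases h : fdim R A with
      | bot => rw [h] at hf0; exact absurd hf0 (by simp)
      | coe f' => exact ⟨f', rfl⟩
    obtain ⟨e', he'⟩ : ∃ e' : ℕ∞, edim R A = ↑e' := by
      cases h : edim R A with
      | bot => rw [h] at he0; exact absurd he0 (by simp)
      | coe e' => exact ⟨e', rfl⟩
    rw [hf', he']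
    by_cases hft : f' = ⊤
    · subst hft
      have h1 : (↑(⊤:ℕ∞) : WithBot ℕ∞) + (1 + ↑(⊤:ℕ∞)) * ↑e'
          = ((↑((⊤:ℕ∞) + (1 + ⊤) * e') : WithBot ℕ∞)) := by
        push_cast
        ring
      rw [h1]
      have h2 : (⊤:ℕ∞) + (1 + ⊤) * e' = ⊤ := by simp
      rw [h2, WithBot.coe_top]
      exact le_top
    by_cases het : e' = ⊤
    · subst het
      have h1 : (↑f' : WithBot ℕ∞) + (1 + ↑f') * ↑(⊤:ℕ∞)
          = ((↑(f' + (1 + f') * ⊤) : WithBot ℕ∞)) := by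
        push_cast
        ring
      rw [h1]
      have hne : (1 : ℕ∞) + f' ≠ 0 := by
        intro h
        have : (1:ℕ∞) ≤ 0 := h ▸ le_add_of_nonneg_right (by simp)
        simp at this
      have h2 : f' + (1 + f') * ⊤ = (⊤ : ℕ∞) := by
        rw [ENat.mul_top hne, add_top]
      rw [h2, WithBot.coe_top]
      exact le_top
    · obtain ⟨sf, hsf⟩ := WithTop.ne_top_iff_exists.mp hft
      obtain ⟨se, hse⟩ := WithTop.ne_top_iff_exists.mp het
      rw [← hsf, ← hse]
      have hRHS : ((↑(↑(sf + (sf+1)*se : ℕ) : ℕ∞)) : WithBot ℕ∞)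
          = ↑(↑sf : ℕ∞) + (1 + ↑(↑sf : ℕ∞)) * ↑(↑se : ℕ∞) := by
        have h : ((sf + (sf+1)*se : ℕ) : ℕ∞) = (sf:ℕ∞) + (1+(sf:ℕ∞))*(se:ℕ∞) := by
          push_cast
          ring
        rw [h, WithBot.coe_add, WithBot.coe_mul, WithBot.coe_add, WithBot.coe_one]
      refine le_trans ?_ (le_of_eq hRHS)
      refine iSup_le fun l => ?_
      have key : l.length ≤ sf + (sf+1) * se := by
        refine StmtAux.comb_lemma
          (q := fun i => (⟨cm (l.toFun i), heff _⟩ : {p : PrimeSpectrum R // IsEffective R A p}))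
          ?_ ?_ ?_
        · intro i j hij
          exact Subtype.mk_le_mk.mpr (hcm_mono (l.monotone hij))
        · intro i j hij heq
          rw [Subtype.mk.injEq] at heq
          have hij' : (i : ℕ) ≤ (j : ℕ) := hij
          set m := (j : ℕ) - (i : ℕ) with hm
          have hjlt : (j : ℕ) < l.length + 1 := j.2
          set w : Fin (m+1) → PrimeSpectrum A :=
            fun t => l.toFun ⟨(i : ℕ) + (t : ℕ), by omega⟩ with hw
          have hwstrict : StrictMono w := by
            intro t t' ht
            exact l.strictMono (by
              show ((⟨(i : ℕ) + (t : ℕ), _⟩ : Fin (l.length + 1)) : Fin (l.length+1))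
                < ⟨(i : ℕ) + (t' : ℕ), _⟩
              rw [Fin.mk_lt_mk]
              have : (t : ℕ) < (t' : ℕ) := ht
              omega)
          have hwc : ∀ t, (w t).asIdeal.comap (algebraMap R A) = (cm (l.toFun i)).asIdeal := by
            intro t
            have h1 : cm (l.toFun i) ≤ cm (w t) :=
              hcm_mono (l.monotone (by
                show (i : ℕ) ≤ (i : ℕ) + (t : ℕ)
                omega))
            have h2 : cm (w t) ≤ cm (l.toFun j) :=
              hcm_mono (l.monotone (by
                show (i : ℕ) + (t : ℕ) ≤ (j : ℕ)
                have := t.2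
                omega))
            rw [← heq] at h2
            have : cm (w t) = cm (l.toFun i) := le_antisymm h2 h1
            exact congrArg PrimeSpectrum.asIdeal this
          have hchain := StmtAux.fiber_chain_le (A := A) (cm (l.toFun i)).asIdeal w hwstrict hwc
          have hle : (m : WithBot ℕ∞) ≤ ((↑(↑sf : ℕ∞)) : WithBot ℕ∞) := by
            refine le_trans hchain (le_trans (hfd_le (l.toFun i)) ?_)
            rw [hf', ← hsf]
            exact le_rfl
          exact_mod_cast hle
        · intro m v hv
          have hchain := Order.LTSeries.length_le_krullDim
            ⟨m, v, fun i => hv i.castSucc_lt_succ⟩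
          have hle : (m : WithBot ℕ∞) ≤ ((↑(↑se : ℕ∞)) : WithBot ℕ∞) := by
            refine le_trans hchain ?_
            rw [show Order.krullDim {p : PrimeSpectrum R // IsEffective R A p} = edim R A from rfl,
              he', ← hse]
            exact le_rfl
          exact_mod_cast hle
      exact_mod_cast key

end
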